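/- Let Ω ⊂ ℝ² be a connected open set, let u be real analytic on Ω, and let Φ : ℝ² → ℝ be a function that is not identically zero on any nonempty open subset of ℝ², such that Φ(Δu(p), det D²u(p)) = 0 for every p ∈ Ω. Then the Jacobian J[Δu, det D²u] vanishes identically on Ω. -/

import Mathlib

open Set Metric Topology Asymptotics MvPolynomial Matrix

/-- Partial derivative with respect to the first variable. -/
noncomputable def pdx (f : ℝ × ℝ → ℝ) (p : ℝ × ℝ) : ℝ :=
  deriv (fun x => f (x, p.2)) p.1

/-- Partial derivative with respect to the second variable. -/
noncomputable def pdy (f : ℝ × ℝ → ℝ) (p : ℝ × ℝ) : ℝ :=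
  deriv (fun y => f (p.1, y)) p.2

/-- The Laplacian `Δu = u_xx + u_yy`. -/
noncomputable def lap (f : ℝ × ℝ → ℝ) (p : ℝ × ℝ) : ℝ :=
  pdx (pdx f) p + pdy (pdy f) p

/-- The Hessian determinant `det D²u = u_xx u_yy - u_xy²`. -/
noncomputable def hessDet (f : ℝ × ℝ → ℝ) (p : ℝ × ℝ) : ℝ :=
  pdx (pdx f) p * pdy (pdy f) p - (pdx (pdy f) p) ^ 2

/-- The Jacobian `J[f,g] = f_x g_y - f_y g_x`. -/
noncomputable def jacDet (f g : ℝ × ℝ → ℝ) (p : ℝ × ℝ) : ℝ :=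
  pdx f p * pdy g p - pdy f p * pdx g p

lemma pdx_congr {f g : ℝ × ℝ → ℝ} {p : ℝ × ℝ} (h : f =ᶠ[𝓝 p] g) : pdx f p = pdx g p := by
  have hc : ContinuousAt (fun x : ℝ => (x, p.2)) p.1 := by fun_prop
  have hc' : Filter.Tendsto (fun x : ℝ => (x, p.2)) (𝓝 p.1) (𝓝 p) := by exact hc
  have h2 : (fun x : ℝ => f (x, p.2)) =ᶠ[𝓝 p.1] fun x => g (x, p.2) := hc'.eventually h
  exact h2.deriv_eq

lemma pdy_congr {f g : ℝ × ℝ → ℝ} {p : ℝ × ℝ} (h : f =ᶠ[𝓝 p] g) : pdy f p = pdy g p := by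
  have hc : ContinuousAt (fun y : ℝ => (p.1, y)) p.2 := by fun_prop
  have hc' : Filter.Tendsto (fun y : ℝ => (p.1, y)) (𝓝 p.2) (𝓝 p) := by exact hc
  have h2 : (fun y : ℝ => f (p.1, y)) =ᶠ[𝓝 p.2] fun y => g (p.1, y) := hc'.eventually h
  exact h2.deriv_eq

lemma pdx_fderiv {f : ℝ × ℝ → ℝ} {p : ℝ × ℝ} (hf : DifferentiableAt ℝ f p) :
    pdx f p = fderiv ℝ f p (1, 0) := by
  have hline : HasDerivAt (fun x : ℝ => (x, p.2)) ((1 : ℝ), (0 : ℝ)) p.1 :=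
    (hasDerivAt_id p.1).prodMk (hasDerivAt_const p.1 p.2)
  exact (hf.hasFDerivAt.comp_hasDerivAt p.1 hline).deriv

lemma pdy_fderiv {f : ℝ × ℝ → ℝ} {p : ℝ × ℝ} (hf : DifferentiableAt ℝ f p) :
    pdy f p = fderiv ℝ f p (0, 1) := by
  have hline : HasDerivAt (fun y : ℝ => (p.1, y)) ((0 : ℝ), (1 : ℝ)) p.2 :=
    (hasDerivAt_const p.2 p.1).prodMk (hasDerivAt_id p.2)
  exact (hf.hasFDerivAt.comp_hasDerivAt p.2 hline).deriv

lemma clm_apply_pair (T : (ℝ × ℝ) →L[ℝ] ℝ) (x y : ℝ) :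
    T (x, y) = x * T (1, 0) + y * T (0, 1) := by
  have : ((x, y) : ℝ × ℝ) = x • ((1 : ℝ), (0 : ℝ)) + y • ((0 : ℝ), (1 : ℝ)) := by
    simp [Prod.ext_iff]
  rw [this, map_add, T.map_smul, T.map_smul, smul_eq_mul, smul_eq_mul]

/-- If `u` is real analytic on a connected open set `Ω ⊂ ℝ²` and
`Φ(Δu, det D²u) = 0` on `Ω` for some `Φ : ℝ² → ℝ` that is not identically zero on any
nonempty open subset of `ℝ²`, then the Jacobian `J[Δu, det D²u]` vanishes identically
on `Ω`. -/
theorem jacobian_vanishes_of_functional_relation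
    (Ω : Set (ℝ × ℝ)) (hΩopen : IsOpen Ω) (hΩconn : IsConnected Ω)
    (u : ℝ × ℝ → ℝ) (hu : AnalyticOnNhd ℝ u Ω)
    (Φ : ℝ × ℝ → ℝ)
    (hΦnz : ∀ U : Set (ℝ × ℝ), IsOpen U → U.Nonempty → ∃ z ∈ U, Φ z ≠ 0)
    (hΦ : ∀ p ∈ Ω, Φ (lap u p, hessDet u p) = 0) :
    ∀ p ∈ Ω, jacDet (lap u) (hessDet u) p = 0 := by
  -- first-order derivatives as analytic functions
  set ux : ℝ × ℝ → ℝ := fun q => fderiv ℝ u q ((1 : ℝ), (0 : ℝ)) with hux_def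
  set uy : ℝ × ℝ → ℝ := fun q => fderiv ℝ u q ((0 : ℝ), (1 : ℝ)) with huy_def
  have hux : AnalyticOnNhd ℝ ux Ω :=
    (ContinuousLinearMap.apply ℝ ℝ (((1 : ℝ), (0 : ℝ)))).comp_analyticOnNhd hu.fderiv
  have huy : AnalyticOnNhd ℝ uy Ω :=
    (ContinuousLinearMap.apply ℝ ℝ (((0 : ℝ), (1 : ℝ)))).comp_analyticOnNhd hu.fderiv
  -- second-order derivatives
  set A : ℝ × ℝ → ℝ := fun q => fderiv ℝ ux q ((1 : ℝ), (0 : ℝ)) with hA_def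
  set B : ℝ × ℝ → ℝ := fun q => fderiv ℝ uy q ((0 : ℝ), (1 : ℝ)) with hB_def
  set C : ℝ × ℝ → ℝ := fun q => fderiv ℝ uy q ((1 : ℝ), (0 : ℝ)) with hC_def
  have hA : AnalyticOnNhd ℝ A Ω :=
    (ContinuousLinearMap.apply ℝ ℝ (((1 : ℝ), (0 : ℝ)))).comp_analyticOnNhd hux.fderiv
  have hB : AnalyticOnNhd ℝ B Ω :=
    (ContinuousLinearMap.apply ℝ ℝ (((0 : ℝ), (1 : ℝ)))).comp_analyticOnNhd huy.fderiv
  have hC : AnalyticOnNhd ℝ C Ω :=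
    (ContinuousLinearMap.apply ℝ ℝ (((1 : ℝ), (0 : ℝ)))).comp_analyticOnNhd huy.fderiv
  set L : ℝ × ℝ → ℝ := fun q => A q + B q with hL_def
  set H : ℝ × ℝ → ℝ := fun q => A q * B q - (C q) ^ 2 with hH_def
  have hL : AnalyticOnNhd ℝ L Ω := hA.add hB
  have hH : AnalyticOnNhd ℝ H Ω := (hA.mul hB).sub (hC.pow 2)
  -- pdx u = ux, pdy u = uy on Ω
  have hpdx_u : ∀ q ∈ Ω, pdx u q = ux q := fun q hq =>
    pdx_fderiv (hu q hq).differentiableAt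
  have hpdy_u : ∀ q ∈ Ω, pdy u q = uy q := fun q hq =>
    pdy_fderiv (hu q hq).differentiableAt
  have hevx : ∀ p ∈ Ω, pdx u =ᶠ[𝓝 p] ux := fun p hp =>
    Filter.eventually_of_mem (hΩopen.mem_nhds hp) hpdx_u
  have hevy : ∀ p ∈ Ω, pdy u =ᶠ[𝓝 p] uy := fun p hp =>
    Filter.eventually_of_mem (hΩopen.mem_nhds hp) hpdy_u
  -- lap u = L and hessDet u = H on Ω
  have hlap : ∀ p ∈ Ω, lap u p = L p := by
    intro p hp
    have h1 : pdx (pdx u) p = A p := by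
      rw [pdx_congr (hevx p hp)]
      exact pdx_fderiv (hux p hp).differentiableAt
    have h2 : pdy (pdy u) p = B p := by
      rw [pdy_congr (hevy p hp)]
      exact pdy_fderiv (huy p hp).differentiableAt
    simp [lap, h1, h2, hL_def]
  have hhess : ∀ p ∈ Ω, hessDet u p = H p := by
    intro p hp
    have h1 : pdx (pdx u) p = A p := by
      rw [pdx_congr (hevx p hp)]
      exact pdx_fderiv (hux p hp).differentiableAt
    have h2 : pdy (pdy u) p = B p := by
      rw [pdy_congr (hevy p hp)]
      exact pdy_fderiv (huy p hp).differentiableAt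
    have h3 : pdx (pdy u) p = C p := by
      rw [pdx_congr (hevy p hp)]
      exact pdx_fderiv (huy p hp).differentiableAt
    simp [hessDet, h1, h2, h3, hH_def]
  -- main argument
  intro p hp
  by_contra hjac
  -- express jacDet via fderivs of L and H
  have hevL : lap u =ᶠ[𝓝 p] L := Filter.eventually_of_mem (hΩopen.mem_nhds hp) hlap
  have hevH : hessDet u =ᶠ[𝓝 p] H := Filter.eventually_of_mem (hΩopen.mem_nhds hp) hhess
  set a := fderiv ℝ L p ((1 : ℝ), (0 : ℝ)) with ha_def
  set b := fderiv ℝ L p ((0 : ℝ), (1 : ℝ)) with hb_def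
  set c := fderiv ℝ H p ((1 : ℝ), (0 : ℝ)) with hc_def
  set d := fderiv ℝ H p ((0 : ℝ), (1 : ℝ)) with hd_def
  have hjac' : jacDet (lap u) (hessDet u) p = a * d - b * c := by
    unfold jacDet
    rw [pdx_congr hevL, pdy_congr hevH, pdy_congr hevL, pdx_congr hevH,
      pdx_fderiv (hL p hp).differentiableAt, pdy_fderiv (hH p hp).differentiableAt,
      pdy_fderiv (hL p hp).differentiableAt, pdx_fderiv (hH p hp).differentiableAt]
  rw [hjac'] at hjac
  set Δ := a * d - b * c with hΔ_def
  -- the derivative of F := (L, H) at p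
  set F : ℝ × ℝ → ℝ × ℝ := fun q => (L q, H q) with hF_def
  have hFan : AnalyticOnNhd ℝ F Ω := hL.prod hH
  set f : (ℝ × ℝ) →L[ℝ] (ℝ × ℝ) := (fderiv ℝ L p).prod (fderiv ℝ H p) with hf_def
  have hf : HasFDerivAt F f p :=
    ((hL p hp).differentiableAt.hasFDerivAt).prodMk ((hH p hp).differentiableAt.hasFDerivAt)
  have hstrict : HasStrictFDerivAt F f p := by
    have := (hFan p hp).hasStrictFDerivAt
    rwa [hf.fderiv] at this
  -- inverse of f
  set g : (ℝ × ℝ) →L[ℝ] (ℝ × ℝ) :=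
    Δ⁻¹ • ((d • ContinuousLinearMap.fst ℝ ℝ ℝ - b • ContinuousLinearMap.snd ℝ ℝ ℝ).prod
      (a • ContinuousLinearMap.snd ℝ ℝ ℝ - c • ContinuousLinearMap.fst ℝ ℝ ℝ)) with hg_def
  have hfv : ∀ x y : ℝ, f (x, y) = (a * x + b * y, c * x + d * y) := by
    intro x y
    have h1 := clm_apply_pair (fderiv ℝ L p) x y
    have h2 := clm_apply_pair (fderiv ℝ H p) x y
    rw [hf_def, ContinuousLinearMap.prod_apply, h1, h2, ha_def, hb_def, hc_def, hd_def]
    rw [Prod.mk.injEq]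
    constructor <;> ring
  have hgv : ∀ x y : ℝ, g (x, y) = (Δ⁻¹ * (d * x - b * y), Δ⁻¹ * (a * y - c * x)) := by
    intro x y
    rw [hg_def]
    simp [ContinuousLinearMap.prod_apply, Prod.smul_def, smul_eq_mul]
    all_goals (constructor <;> ring)
  have hgf : ∀ v : ℝ × ℝ, g (f v) = v := by
    rintro ⟨x, y⟩
    rw [hfv, hgv, Prod.mk.injEq]
    have h1 : d * (a * x + b * y) - b * (c * x + d * y) = Δ * x := by rw [hΔ_def]; ring
    have h2 : a * (c * x + d * y) - c * (a * x + b * y) = Δ * y := by rw [hΔ_def]; ring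
    rw [h1, h2]
    constructor <;> field_simp
  have hfg : ∀ v : ℝ × ℝ, f (g v) = v := by
    rintro ⟨x, y⟩
    rw [hgv, hfv, Prod.mk.injEq]
    constructor <;> (field_simp; rw [hΔ_def]; ring)
  set e : (ℝ × ℝ) ≃L[ℝ] (ℝ × ℝ) := ContinuousLinearEquiv.equivOfInverse f g hgf hfg with he_def
  have hstrict' : HasStrictFDerivAt F (e : (ℝ × ℝ) →L[ℝ] (ℝ × ℝ)) p := hstrict
  have hmap : Filter.map F (𝓝 p) = 𝓝 (F p) := hstrict'.map_nhds_eq_of_equiv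
  have himg : F '' Ω ∈ 𝓝 (F p) := by
    rw [← hmap]
    exact Filter.image_mem_map (hΩopen.mem_nhds hp)
  have hint : (interior (F '' Ω)).Nonempty :=
    ⟨F p, mem_interior_iff_mem_nhds.2 himg⟩
  obtain ⟨z, hz, hzne⟩ := hΦnz (interior (F '' Ω)) isOpen_interior hint
  obtain ⟨q, hq, rfl⟩ := interior_subset hz
  apply hzne
  have : F q = (lap u q, hessDet u q) := by
    simp [hF_def, hlap q hq, hhess q hq]
  rw [this]
  exact hΦ q hq
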